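/- For every real α with α ≠ 1/2 and every real x with 0 < |x| < 1, the series ∑_{r=0}^∞ ((α)_r (α+1/2)_r / ((3/2)_r · r!)) (-x²)^r converges absolutely and equals (1+x²)^{(1-2α)/2} sin((1-2α) arctan x) / ((1-2α) x). -/

import Mathlib

open Real

section StmtAux
open Finset Filter Metric Complex
open scoped Topology


private lemma asc_eval_prod (y : ℝ) (n : ℕ) :
    (ascPochhammer ℝ n).eval y = ∏ i ∈ Finset.range n, (y + i) := by
  induction n with
  | zero => simp
  | succ n ih => rw [ascPochhammer_succ_eval, ih, Finset.prod_range_succ]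

private lemma asc_dup (α : ℝ) (r : ℕ) :
    (ascPochhammer ℝ (2*r)).eval (2*α) =
      4^r * ((ascPochhammer ℝ r).eval α * (ascPochhammer ℝ r).eval (α + 1/2)) := by
  induction r with
  | zero => simp
  | succ n ih =>
    have h : 2 * (n+1) = (2*n) + 1 + 1 := by ring
    rw [h, ascPochhammer_succ_eval, ascPochhammer_succ_eval, ih,
      ascPochhammer_succ_eval, ascPochhammer_succ_eval]
    push_cast
    ring

private lemma asc_three_half (r : ℕ) :
    (4:ℝ)^r * ((ascPochhammer ℝ r).eval (3/2) * (Nat.factorial r)) =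
      ((2*r+1).factorial : ℝ) := by
  induction r with
  | zero => simp
  | succ n ih =>
    have h : 2 * (n+1) + 1 = (2*n+1) + 1 + 1 := by ring
    rw [h, Nat.factorial_succ, Nat.factorial_succ, ascPochhammer_succ_eval, Nat.factorial_succ]
    push_cast
    push_cast at ih
    linear_combination (4*(3/2+(n:ℝ))*((n:ℝ)+1)) * ih

private lemma D_odd (α : ℝ) (r : ℕ) :
    (∏ k ∈ Finset.range (2*r+1), ((1 - 2*α) - (k:ℝ))) =
      (1-2*α) * (ascPochhammer ℝ (2*r)).eval (2*α) := by
  rw [Finset.prod_range_succ', asc_eval_prod]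
  have h1 : ∀ i ∈ Finset.range (2*r), ((1 - 2*α) - ((i:ℕ)+1 : ℕ)) = -(2*α + i) := by
    intro i _; push_cast; ring
  rw [Finset.prod_congr rfl h1]
  have h2 : ∀ i ∈ Finset.range (2*r), -(2*α + (i:ℝ)) = (-1) * (2*α + i) := by
    intro i _; ring
  rw [Finset.prod_congr rfl h2, Finset.prod_mul_distrib, Finset.prod_const]
  simp [pow_mul]
  ring


noncomputable def bcAux (v : ℂ) (n : ℕ) : ℂ :=
  (∏ k ∈ Finset.range n, (v - (k:ℂ))) / (n.factorial : ℂ)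

lemma bcAux_rec (v : ℂ) (n : ℕ) :
    ((n:ℂ) + 1) * bcAux v (n+1) = (v - n) * bcAux v n := by
  have h1 : ((n.factorial : ℂ)) ≠ 0 := Nat.cast_ne_zero.mpr n.factorial_ne_zero
  have h2 : ((n:ℂ) + 1) ≠ 0 := Nat.cast_add_one_ne_zero n
  simp only [bcAux, Finset.prod_range_succ, Nat.factorial_succ]
  push_cast
  field_simp

lemma bcAux_norm_rec (v : ℂ) (n : ℕ) :
    ((n:ℝ) + 1) * ‖bcAux v (n+1)‖ = ‖v - (n:ℂ)‖ * ‖bcAux v n‖ := by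
  have h := congrArg norm (bcAux_rec v n)
  rw [norm_mul, norm_mul] at h
  rwa [show ((n:ℂ) + 1) = ((n+1 : ℕ) : ℂ) by push_cast; ring, Complex.norm_natCast,
    Nat.cast_add, Nat.cast_one] at h

lemma bc_key (v : ℂ) {ρ t : ℝ} (hρ0 : 0 ≤ ρ) (htρ : ρ < t) {N : ℕ}
    (hN : ‖v‖ * ρ / (t - ρ) ≤ N) {n : ℕ} (hn : N ≤ n) :
    ‖v - (n:ℂ)‖ * ρ ≤ t * n := by
  have h1 : ‖v - (n:ℂ)‖ ≤ ‖v‖ + n := by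
    calc ‖v - (n:ℂ)‖ ≤ ‖v‖ + ‖(n:ℂ)‖ := norm_sub_le _ _
    _ = ‖v‖ + n := by rw [Complex.norm_natCast]
  have h4 : (0:ℝ) < t - ρ := by linarith
  have h2 : ‖v‖ * ρ ≤ (t - ρ) * n := by
    have h3 : ‖v‖ * ρ / (t - ρ) ≤ (n:ℝ) := le_trans hN (by exact_mod_cast hn)
    calc ‖v‖ * ρ = (‖v‖ * ρ / (t - ρ)) * (t - ρ) := by field_simp
    _ ≤ (n:ℝ) * (t - ρ) := mul_le_mul_of_nonneg_right h3 (le_of_lt h4)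
    _ = (t - ρ) * n := by ring
  nlinarith [mul_le_mul_of_nonneg_right h1 hρ0]

/-- ratio-test summability for the derivative-weighted series -/
lemma bc_summable_deriv (v : ℂ) {ρ : ℝ} (hρ0 : 0 ≤ ρ) (hρ1 : ρ < 1) :
    Summable (fun n : ℕ => (n:ℝ) * ‖bcAux v n‖ * ρ ^ (n-1)) := by
  set t : ℝ := (1 + ρ)/2 with ht
  have htρ : ρ < t := by rw [ht]; linarith
  have ht1 : t < 1 := by rw [ht]; linarith
  have ht0 : 0 ≤ t := by rw [ht]; linarith
  obtain ⟨N, hN⟩ := exists_nat_ge (‖v‖ * ρ / (t - ρ))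
  apply summable_of_ratio_norm_eventually_le ht1
  filter_upwards [eventually_ge_atTop (max N 1)] with n hn
  have hn1 : 1 ≤ n := le_trans (le_max_right _ _) hn
  have key := bc_key v hρ0 htρ hN (le_trans (le_max_left _ _) hn)
  have hpow : ρ ^ (n-1) * ρ = ρ ^ n := by
    rw [← pow_succ]; congr 1; omega
  rw [Real.norm_of_nonneg (by positivity), Real.norm_of_nonneg (by positivity)]
  have hstep : ((n+1:ℕ):ℝ) * ‖bcAux v (n+1)‖ * ρ ^ ((n+1)-1)
      = (‖bcAux v n‖ * ρ ^ (n-1)) * (‖v - (n:ℂ)‖ * ρ) := by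
    push_cast
    rw [bcAux_norm_rec]
    rw [← hpow]
    ring
  rw [hstep]
  have h5 : (‖bcAux v n‖ * ρ ^ (n-1)) * (‖v - (n:ℂ)‖ * ρ)
      ≤ (‖bcAux v n‖ * ρ ^ (n-1)) * (t * n) :=
    mul_le_mul_of_nonneg_left key (by positivity)
  calc (‖bcAux v n‖ * ρ ^ (n-1)) * (‖v - (n:ℂ)‖ * ρ)
      ≤ (‖bcAux v n‖ * ρ ^ (n-1)) * (t * n) := h5
    _ = t * ((n:ℝ) * ‖bcAux v n‖ * ρ ^ (n-1)) := by ring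

/-- plain summability -/
lemma bc_summable (v : ℂ) {ρ : ℝ} (hρ0 : 0 ≤ ρ) (hρ1 : ρ < 1) :
    Summable (fun n : ℕ => ‖bcAux v n‖ * ρ ^ n) := by
  set t : ℝ := (1 + ρ)/2 with ht
  have htρ : ρ < t := by rw [ht]; linarith
  have ht1 : t < 1 := by rw [ht]; linarith
  have ht0 : 0 ≤ t := by rw [ht]; linarith
  obtain ⟨N, hN⟩ := exists_nat_ge (‖v‖ * ρ / (t - ρ))
  apply summable_of_ratio_norm_eventually_le ht1
  filter_upwards [eventually_ge_atTop N] with n hn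
  have key := bc_key v hρ0 htρ hN hn
  have key' : ‖v - (n:ℂ)‖ * ρ ≤ t * (n+1) := by nlinarith
  rw [Real.norm_of_nonneg (by positivity), Real.norm_of_nonneg (by positivity)]
  rw [← mul_le_mul_iff_left₀ (show (0:ℝ) < (n:ℝ)+1 by positivity)]
  have hstep : ‖bcAux v (n+1)‖ * ρ ^ (n+1) * ((n:ℝ)+1)
      = (‖bcAux v n‖ * ρ ^ n) * (‖v - (n:ℂ)‖ * ρ) := by
    rw [mul_comm _ ((n:ℝ)+1), ← mul_assoc, bcAux_norm_rec, pow_succ]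
    ring
  rw [hstep]
  have h5 : (‖bcAux v n‖ * ρ ^ n) * (‖v - (n:ℂ)‖ * ρ)
      ≤ (‖bcAux v n‖ * ρ ^ n) * (t * (n+1)) :=
    mul_le_mul_of_nonneg_left key' (by positivity)
  calc (‖bcAux v n‖ * ρ ^ n) * (‖v - (n:ℂ)‖ * ρ)
      ≤ (‖bcAux v n‖ * ρ ^ n) * (t * (n+1)) := h5
    _ = t * (‖bcAux v n‖ * ρ ^ n) * ((n:ℝ)+1) := by ring



lemma bc_norm_term (v : ℂ) (n : ℕ) (w : ℂ) :
    ‖bcAux v n * w ^ n‖ = ‖bcAux v n‖ * ‖w‖ ^ n := by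
  rw [norm_mul, norm_pow]

lemma bc_summable_at (v : ℂ) {w : ℂ} (hw : ‖w‖ < 1) :
    Summable (fun n : ℕ => bcAux v n * w ^ n) := by
  apply Summable.of_norm
  simpa [bc_norm_term] using bc_summable v (norm_nonneg w) hw

lemma bc_summable_deriv_at (v : ℂ) {w : ℂ} (hw : ‖w‖ < 1) :
    Summable (fun n : ℕ => bcAux v n * ((n:ℂ) * w ^ (n-1))) := by
  apply Summable.of_norm
  have := bc_summable_deriv v (norm_nonneg w) hw
  apply this.of_nonneg_of_le (fun n => norm_nonneg _)
  intro n
  rw [norm_mul, norm_mul, norm_pow, Complex.norm_natCast]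
  exact le_of_eq (by ring)

lemma hasSum_binomial (v : ℂ) {z : ℂ} (hz : ‖z‖ < 1) :
    HasSum (fun n : ℕ => bcAux v n * z ^ n) ((1 + z) ^ v) := by
  set F : ℂ → ℂ := fun w => ∑' n, bcAux v n * w ^ n with hF
  -- derivative of F inside the unit ball
  have key : ∀ w ∈ ball (0:ℂ) 1,
      HasDerivAt F (∑' n, bcAux v n * ((n:ℂ) * w ^ (n-1))) w := by
    intro w hw
    rw [mem_ball_zero_iff] at hw
    set ρ : ℝ := (‖w‖ + 1)/2 with hρ
    have hρ0 : 0 < ρ := by positivity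
    have hρ1 : ρ < 1 := by rw [hρ]; linarith
    have hwρ : ‖w‖ < ρ := by rw [hρ]; linarith
    apply hasDerivAt_tsum_of_isPreconnected
      (bc_summable_deriv v hρ0.le hρ1) isOpen_ball (convex_ball _ _).isPreconnected
      (g := fun (n : ℕ) (y : ℂ) => bcAux v n * y ^ n)
      (g' := fun (n : ℕ) (y : ℂ) => bcAux v n * ((n:ℂ) * y ^ (n-1)))
      (y₀ := (0:ℂ))
      (fun n y _ => (hasDerivAt_pow n y).const_mul (bcAux v n))
      ?_ (mem_ball_zero_iff.mpr (by simp [hρ0])) ?_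
      (mem_ball_zero_iff.mpr hwρ)
    · intro n y hy
      rw [norm_mul, norm_mul, norm_pow, Complex.norm_natCast]
      have : ‖y‖ ^ (n-1) ≤ ρ ^ (n-1) :=
        pow_le_pow_left₀ (norm_nonneg _) (le_of_lt (mem_ball_zero_iff.mp hy)) _
      calc ‖bcAux v n‖ * ((n:ℝ) * ‖y‖ ^ (n-1))
          ≤ ‖bcAux v n‖ * ((n:ℝ) * ρ ^ (n-1)) := by
            apply mul_le_mul_of_nonneg_left _ (norm_nonneg _)
            exact mul_le_mul_of_nonneg_left this (Nat.cast_nonneg n)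
        _ = (n:ℝ) * ‖bcAux v n‖ * ρ ^ (n-1) := by ring
    · exact bc_summable_at v (by simp)
  -- the ODE
  have ode : ∀ w : ℂ, ‖w‖ < 1 →
      (1 + w) * (∑' n, bcAux v n * ((n:ℂ) * w ^ (n-1))) = v * F w := by
    intro w hw
    have hS : Summable (fun n : ℕ => bcAux v n * ((n:ℂ) * w ^ (n-1))) :=
      bc_summable_deriv_at v hw
    have hT : Summable (fun n : ℕ => bcAux v n * w ^ n) := bc_summable_at v hw
    have hN : Summable (fun n : ℕ => (n:ℂ) * bcAux v n * w ^ n) := by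
      have h1 := hS.mul_left w
      apply h1.congr
      intro n
      cases n with
      | zero => simp
      | succ m =>
        simp only [Nat.succ_sub_one, pow_succ]
        ring
    have hshift : (∑' n, bcAux v n * ((n:ℂ) * w ^ (n-1)))
        = ∑' n : ℕ, (v - (n:ℂ)) * bcAux v n * w ^ n := by
      rw [Summable.tsum_eq_zero_add hS]
      simp only [Nat.cast_zero, zero_mul, mul_zero, zero_add]
      apply tsum_congr
      intro n
      have hrec := bcAux_rec v n
      simp only [Nat.succ_sub_one]
      push_cast
      calc bcAux v (n+1) * (((n:ℕ)+1:ℂ) * w ^ n)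
          = ((((n:ℂ))+1) * bcAux v (n+1)) * w ^ n := by push_cast; ring
        _ = ((v - n) * bcAux v n) * w ^ n := by rw [hrec]
        _ = (v - (n:ℂ)) * bcAux v n * w ^ n := by ring
    have hVN : Summable (fun n : ℕ => (v - (n:ℂ)) * bcAux v n * w ^ n) := by
      apply ((hT.mul_left v).sub hN).congr
      intro n; ring
    calc (1 + w) * (∑' n, bcAux v n * ((n:ℂ) * w ^ (n-1)))
        = ∑' n : ℕ, ((bcAux v n * ((n:ℂ) * w ^ (n-1))) + w * (bcAux v n * ((n:ℂ) * w ^ (n-1)))) := by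
          rw [← tsum_mul_left]
          apply tsum_congr; intro n; ring
      _ = (∑' n : ℕ, bcAux v n * ((n:ℂ) * w ^ (n-1)))
            + ∑' n : ℕ, w * (bcAux v n * ((n:ℂ) * w ^ (n-1))) := Summable.tsum_add hS (hS.mul_left w)
      _ = (∑' n : ℕ, (v - (n:ℂ)) * bcAux v n * w ^ n)
            + ∑' n : ℕ, (n:ℂ) * bcAux v n * w ^ n := by
          rw [hshift]
          congr 1
          apply tsum_congr; intro n
          cases n with
          | zero => simp
          | succ m =>
            simp only [Nat.succ_sub_one, pow_succ]
            ring
      _ = ∑' n : ℕ, v * (bcAux v n * w ^ n) := by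
          rw [← Summable.tsum_add hVN hN]
          apply tsum_congr; intro n; ring
      _ = v * F w := tsum_mul_left
  -- slit plane facts
  have hslit : ∀ w : ℂ, ‖w‖ < 1 → (1 + w) ∈ Complex.slitPlane := by
    intro w hw
    rw [Complex.mem_slitPlane_iff]
    left
    have := Complex.abs_re_le_norm w
    simp only [Complex.add_re, Complex.one_re]
    have h2 : |w.re| < 1 := lt_of_le_of_lt this hw
    rw [abs_lt] at h2
    linarith
  -- the constancy argument
  set G : ℂ → ℂ := fun w => F w * Complex.exp (-v * Complex.log (1 + w)) with hG
  have hGderiv : ∀ w ∈ ball (0:ℂ) 1, HasDerivAt G 0 w := by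
    intro w hw
    have hw1 : ‖w‖ < 1 := mem_ball_zero_iff.mp hw
    have hsl := hslit w hw1
    have h1w : (1 : ℂ) + w ≠ 0 := Complex.slitPlane_ne_zero hsl
    have hlog : HasDerivAt (fun y : ℂ => Complex.log (1 + y)) (1 + w)⁻¹ w :=
      (Complex.hasDerivAt_log hsl).comp_const_add 1 w
    have hexp : HasDerivAt (fun y : ℂ => Complex.exp (-v * Complex.log (1 + y)))
        (Complex.exp (-v * Complex.log (1 + w)) * (-v * (1 + w)⁻¹)) w :=
      (hlog.const_mul (-v)).cexp
    have hmul := (key w hw).mul hexp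
    refine HasDerivAt.congr_deriv hmul ?_
    have hode := ode w hw1
    set E := Complex.exp (-v * Complex.log (1 + w)) with hE
    set S := ∑' (n : ℕ), bcAux v n * ((n:ℂ) * w ^ (n - 1)) with hS
    have h2 : S = v * F w / (1+w) := by
      rw [eq_div_iff h1w]
      linear_combination hode
    rw [h2]
    field_simp
    ring
  have hconst : G z = G 0 := by
    apply (convex_ball (0:ℂ) 1).is_const_of_fderivWithin_eq_zero (𝕜 := ℂ)
      (fun y hy => ((hGderiv y hy).differentiableAt).differentiableWithinAt)
      ?_ (mem_ball_zero_iff.mpr hz) (mem_ball_zero_iff.mpr (by simp))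
    intro y hy
    rw [fderivWithin_of_isOpen isOpen_ball hy, ((hGderiv y hy).hasFDerivAt).fderiv]
    ext u
    simp
  have hF0 : F 0 = 1 := by
    rw [hF]
    simp only
    rw [tsum_eq_single 0 (fun n hn => by simp [zero_pow hn])]
    simp [bcAux]
  have hG0 : G 0 = 1 := by
    rw [hG]
    simp only [add_zero, Complex.log_one, mul_zero, Complex.exp_zero, mul_one]
    exact hF0
  have h1z : (1 : ℂ) + z ≠ 0 := Complex.slitPlane_ne_zero (hslit z hz)
  have hFz : F z = (1 + z) ^ v := by
    have h := hconst
    rw [hG0] at h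
    -- h : F z * exp(-v log(1+z)) = 1
    rw [Complex.cpow_def_of_ne_zero h1z, mul_comm (Complex.log (1+z)) v]
    calc F z = F z * Complex.exp (-v * Complex.log (1+z)) * Complex.exp (v * Complex.log (1+z)) := by
          rw [mul_assoc, ← Complex.exp_add]
          simp
      _ = Complex.exp (v * Complex.log (1+z)) := by
          have h' : F z * Complex.exp (-v * Complex.log (1+z)) = 1 := h
          rw [h', one_mul]
  have hsum := (bc_summable_at v hz).hasSum
  rwa [show (∑' n : ℕ, bcAux v n * z ^ n) = (1+z)^v from hFz] at hsum

end StmtAux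

open Finset in
private lemma term_eq (α x : ℝ) (r : ℕ) :
    (ascPochhammer ℝ r).eval α * (ascPochhammer ℝ r).eval (α + 1 / 2) /
        ((ascPochhammer ℝ r).eval (3 / 2) * (Nat.factorial r)) * (-x ^ 2) ^ r =
      (ascPochhammer ℝ (2*r)).eval (2*α) * ((-1)^r * x^(2*r)) / ((2*r+1).factorial : ℝ) := by
  have h2 := asc_three_half r
  have h1 := asc_dup α r
  have h4 : (4:ℝ)^r ≠ 0 := by positivity
  have hfac : (0:ℝ) < ((2*r+1).factorial : ℝ) := by exact_mod_cast (2*r+1).factorial_pos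
  have hD : (ascPochhammer ℝ r).eval (3/2) * (Nat.factorial r : ℝ) ≠ 0 := by
    intro h
    rw [h, mul_zero] at h2
    exact hfac.ne' h2.symm
  have hx2 : ((-x^2 : ℝ))^r = (-1)^r * x^(2*r) := by
    rw [neg_pow, pow_mul]
  rw [hx2, h1, ← h2]
  field_simp

theorem stmt_11 (α x : ℝ) (hα : α ≠ 1 / 2) (hx0 : 0 < |x|) (hx1 : |x| < 1) :
    Summable (fun r : ℕ =>
      |(ascPochhammer ℝ r).eval α * (ascPochhammer ℝ r).eval (α + 1 / 2) /
        ((ascPochhammer ℝ r).eval (3 / 2) * (Nat.factorial r)) * (-x ^ 2) ^ r|) ∧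
    ∑' r : ℕ, (ascPochhammer ℝ r).eval α * (ascPochhammer ℝ r).eval (α + 1 / 2) /
        ((ascPochhammer ℝ r).eval (3 / 2) * (Nat.factorial r)) * (-x ^ 2) ^ r =
      (1 + x ^ 2) ^ ((1 - 2 * α) / 2) * Real.sin ((1 - 2 * α) * Real.arctan x) /
        ((1 - 2 * α) * x) := by
  have hx : x ≠ 0 := abs_pos.mp hx0
  set ν : ℝ := 1 - 2*α with hνdef
  have hν0 : ν ≠ 0 := by rw [hνdef]; intro h; apply hα; linarith
  set v : ℂ := (ν : ℂ) with hvdef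
  set z : ℂ := (x:ℂ) * Complex.I with hzdef
  have hznorm : ‖z‖ = |x| := by
    rw [hzdef, norm_mul, Complex.norm_I, mul_one, Complex.norm_real, Real.norm_eq_abs]
  have hz1 : ‖z‖ < 1 := by rw [hznorm]; exact hx1
  set T : ℕ → ℝ := fun r => (ascPochhammer ℝ r).eval α * (ascPochhammer ℝ r).eval (α + 1 / 2) /
        ((ascPochhammer ℝ r).eval (3 / 2) * (Nat.factorial r)) * (-x ^ 2) ^ r with hT
  set Dr : ℕ → ℝ := fun n => (∏ k ∈ Finset.range n, (ν - (k:ℝ))) / (n.factorial : ℝ) with hDr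
  have hbc : ∀ n, bcAux v n = ((Dr n : ℝ) : ℂ) := by
    intro n
    rw [bcAux, hDr]
    push_cast
    rfl
  have hTval : ∀ r, T r = (ascPochhammer ℝ (2*r)).eval (2*α) * ((-1)^r * x^(2*r))
      / ((2*r+1).factorial : ℝ) := fun r => term_eq α x r
  have hDodd : ∀ r : ℕ, Dr (2*r+1) = ν * (ascPochhammer ℝ (2*r)).eval (2*α)
      / ((2*r+1).factorial : ℝ) := by
    intro r
    rw [hDr]
    simp only
    rw [D_odd α r]
  have hfacpos : ∀ r : ℕ, (0:ℝ) < ((2*r+1).factorial : ℝ) :=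
    fun r => by exact_mod_cast (2*r+1).factorial_pos
  -- odd term value
  have hzodd : ∀ r : ℕ, z^(2*r+1) = ((((-1):ℝ)^r * x^(2*r+1) : ℝ) : ℂ) * Complex.I := by
    intro r
    have hI : Complex.I^(2*r+1) = ((-1:ℂ))^r * Complex.I := by
      rw [pow_succ, pow_mul, Complex.I_sq]
    rw [hzdef, mul_pow, hI]
    push_cast
    ring
  have hval_odd : ∀ r : ℕ, bcAux v (2*r+1) * z^(2*r+1)
      = ((ν * x * T r : ℝ) : ℂ) * Complex.I := by
    intro r
    rw [hbc, hzodd, ← mul_assoc, ← Complex.ofReal_mul]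
    congr 2
    rw [hDodd, hTval]
    field_simp
    ring
  -- even terms vanish in the imaginary part
  have him_even : ∀ m : ℕ, (bcAux v (2*m) * z^(2*m)).im = 0 := by
    intro m
    have hzeven : z^(2*m) = ((((-1):ℝ)^m * x^(2*m) : ℝ) : ℂ) := by
      have hI : Complex.I^(2*m) = ((-1:ℂ))^m := by
        rw [pow_mul, Complex.I_sq]
      rw [hzdef, mul_pow, hI]
      push_cast
      ring
    rw [hbc, hzeven, ← Complex.ofReal_mul]
    exact Complex.ofReal_im _
  have hinj : Function.Injective (fun r : ℕ => 2*r+1) := fun a b h => by simp only at h; omega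
  -- summability
  have hnormsum : Summable (fun n : ℕ => ‖bcAux v n * z^n‖) := by
    apply (bc_summable v (norm_nonneg z) hz1).congr
    intro n
    simp [norm_mul, norm_pow]
  have hsub := hnormsum.comp_injective hinj
  have hTabs : ∀ r : ℕ, ‖bcAux v (2*r+1) * z^(2*r+1)‖ = |ν * x| * |T r| := by
    intro r
    rw [hval_odd, norm_mul, Complex.norm_I, mul_one, Complex.norm_real, Real.norm_eq_abs,
      abs_mul]
  have hsummable : Summable (fun r : ℕ => |T r|) := by
    have h1 : Summable (fun r : ℕ => |ν * x| * |T r|) := hsub.congr (fun r => hTabs r)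
    have hne : |ν * x| ≠ 0 := by
      simp [abs_ne_zero, hν0, hx]
    exact (summable_mul_left_iff hne).mp h1
  refine ⟨hsummable, ?_⟩
  -- the sum
  have hs := hasSum_binomial v hz1
  have him := Complex.imCLM.hasSum hs
  have hvanish : ∀ n ∉ Set.range (fun r : ℕ => 2*r+1),
      ((fun n : ℕ => (bcAux v n * z^n).im) n) = 0 := by
    intro n hn
    have hev : Even n := by
      rcases Nat.even_or_odd n with h | h
      · exact h
      · exfalso; obtain ⟨m, hm⟩ := h; exact hn ⟨m, by simp only; omega⟩
    obtain ⟨m, hm⟩ := hev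
    have : n = 2*m := by omega
    rw [this]
    exact him_even m
  have hre : HasSum (fun r : ℕ => (bcAux v (2*r+1) * z^(2*r+1)).im)
      (((1+z)^v).im) := (Function.Injective.hasSum_iff hinj hvanish).mpr him
  have him_odd : ∀ r : ℕ, (bcAux v (2*r+1) * z^(2*r+1)).im = ν * x * T r := by
    intro r
    rw [hval_odd]
    simp
  rw [funext him_odd] at hre
  have hre2 : HasSum T ((ν*x)⁻¹ * ((1+z)^v).im) := by
    have h := hre.mul_left ((ν*x)⁻¹)
    have heq : (fun r => (ν*x)⁻¹ * (ν * x * T r)) = T := by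
      funext r
      rw [← mul_assoc, inv_mul_cancel₀ (mul_ne_zero hν0 hx), one_mul]
    rwa [heq] at h
  rw [hre2.tsum_eq]
  -- compute the imaginary part of the closed form
  have hre1 : ((1:ℂ)+z).re = 1 := by simp [hzdef]
  have him1 : ((1:ℂ)+z).im = x := by simp [hzdef]
  have h1z : (1:ℂ) + z ≠ 0 := by
    intro h
    have := congrArg Complex.re h
    rw [hre1] at this
    simp at this
  have habs : ‖1+z‖ = Real.sqrt (1+x^2) := by
    rw [Complex.norm_def, Complex.normSq_apply, hre1, him1]
    congr 1
    ring
  have harg : Complex.arg (1+z) = Real.arctan x := by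
    have h2 : |Complex.arg (1+z)| < Real.pi/2 :=
      Complex.abs_arg_lt_pi_div_two_iff.mpr (Or.inl (by rw [hre1]; norm_num))
    have h3 := abs_lt.mp h2
    have h4 := Complex.tan_arg (1+z)
    rw [hre1, him1] at h4
    calc Complex.arg (1+z) = Real.arctan (Real.tan (Complex.arg (1+z))) :=
          (Real.arctan_tan h3.1 h3.2).symm
      _ = Real.arctan x := by rw [h4]; norm_num
  have hcpow : (((1:ℂ)+z)^v).im
      = Real.exp (Real.log (1+x^2) * (ν/2)) * Real.sin (ν * Real.arctan x) := by
    rw [Complex.cpow_def_of_ne_zero h1z, Complex.exp_im]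
    congr 1
    · congr 1
      rw [Complex.mul_re, Complex.log_re, Complex.log_im, hvdef]
      rw [Complex.ofReal_re, Complex.ofReal_im, mul_zero, sub_zero, habs,
        Real.log_sqrt (by positivity)]
      ring
    · congr 1
      rw [Complex.mul_im, Complex.log_re, Complex.log_im, hvdef]
      rw [Complex.ofReal_re, Complex.ofReal_im, mul_zero, zero_add, harg]
      ring
  rw [hcpow, Real.rpow_def_of_pos (by positivity : (0:ℝ) < 1 + x^2)]
  rw [inv_mul_eq_div]
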